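/- For any n-dimensional BC network X_n ∈ L_n with n ≥ 5, t_p(X_n) = 2n − 2 = κ₁(X_n), where t_p is the pessimistic diagnosability and κ₁ is the 1-extra connectivity. -/

import Mathlib

open SimpleGraph

/-- `F` is a vertex cut of `G`: deleting `F` from `G` leaves a disconnected graph. -/
def IsVertexCut {V : Type*} (G : SimpleGraph V) (F : Set V) : Prop :=
  ¬ (G.induce (Fᶜ : Set V)).Preconnected

/-- `S` is a 1-extra vertex cut of `G`: `G − S` is disconnected and every
connected component of `G − S` has at least 2 vertices. -/
def IsOneExtraCut {V : Type*} (G : SimpleGraph V) (S : Set V) : Prop :=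
  ¬ (G.induce (Sᶜ : Set V)).Preconnected ∧
    ∀ C : (G.induce (Sᶜ : Set V)).ConnectedComponent, 2 ≤ C.supp.ncard

/-- The 1-extra connectivity `κ₁(G)`: the minimum cardinality of a 1-extra vertex cut. -/
noncomputable def extraConn1 {V : Type*} (G : SimpleGraph V) : ℕ :=
  sInf {m | ∃ S : Set V, IsOneExtraCut G S ∧ S.ncard = m}

/-- `G` is `t/t`-diagnosable: for every `S ⊆ V(G)` with `|S| = p` and `0 ≤ p ≤ t − 1`,
`G − S` has at most one trivial component (a component with exactly one vertex) and
every nontrivial component `C` of `G − S` satisfies `|V(C)| ≥ 2(t−p)+1`. -/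
def PessDiag {V : Type*} (G : SimpleGraph V) (t : ℕ) : Prop :=
  ∀ S : Set V, S.ncard < t →
    ({C : (G.induce (Sᶜ : Set V)).ConnectedComponent | C.supp.ncard = 1}.Subsingleton ∧
      ∀ C : (G.induce (Sᶜ : Set V)).ConnectedComponent, 2 ≤ C.supp.ncard →
        2 * (t - S.ncard) + 1 ≤ C.supp.ncard)

/-- The pessimistic diagnosability `t_p(G)`: the maximum `t` such that `G` is
`t/t`-diagnosable. -/
noncomputable def pessDiagnosability {V : Type*} (G : SimpleGraph V) : ℕ :=
  sSup {t | PessDiag G t}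

/-- The class `L_n` of `n`-dimensional BC networks: `L_1` consists of the complete graph on
two vertices, and a graph is in `L_{n+1}` iff its vertex set is the disjoint union of the
vertex sets of two graphs `G₁, G₂ ∈ L_n` and its edges are those of `G₁`, those of `G₂`,
and a perfect matching (given by a bijection `f`) between the two vertex sets. -/
inductive IsBC : ∀ (n : ℕ) (V : Type), SimpleGraph V → Prop
  | base : IsBC 1 Bool ⊤
  | step {n : ℕ} {V₁ V₂ : Type} (G₁ : SimpleGraph V₁) (G₂ : SimpleGraph V₂) (f : V₁ ≃ V₂) :
      IsBC n V₁ G₁ → IsBC n V₂ G₂ →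
      IsBC (n + 1) (V₁ ⊕ V₂) (SimpleGraph.fromRel (fun u v =>
        (∃ a b, u = Sum.inl a ∧ v = Sum.inl b ∧ G₁.Adj a b) ∨
        (∃ a b, u = Sum.inr a ∧ v = Sum.inr b ∧ G₂.Adj a b) ∨
        (∃ a, u = Sum.inl a ∧ v = Sum.inr (f a))))


section Gen
variable {V : Type*} {G : SimpleGraph V}

lemma walk_closed {A : Set V} (hA : ∀ ⦃x y⦄, x ∈ A → G.Adj x y → y ∈ A)
    {u v : V} (h : G.Reachable u v) (hu : u ∈ A) : v ∈ A := by
  obtain ⟨p⟩ := h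
  revert hu
  induction p with
  | nil => exact id
  | cons hadj p ih => exact fun hu => ih (hA hu hadj)

lemma reach_map {W : Type*} {H : SimpleGraph W} (f : V → W)
    (hf : ∀ ⦃a b⦄, G.Adj a b → H.Adj (f a) (f b)) {u v} (h : G.Reachable u v) :
    H.Reachable (f u) (f v) :=
  Reachable.map ⟨f, fun h' => hf h'⟩ h

lemma pc_of_base (z : V) (h : ∀ x, G.Reachable x z) : G.Preconnected :=
  fun x y => (h x).trans (h y).symm

lemma pc_of_subsingleton {A : Set V} (h : A.Subsingleton) : (G.induce A).Preconnected := by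
  intro x y
  have : x = y := Subtype.ext (h x.2 y.2)
  exact this ▸ Reachable.refl x

/-- reachability in an induced subgraph is monotone in the vertex set -/
lemma reach_mono {A B : Set V} (hAB : A ⊆ B) {x y : V} (hx : x ∈ A) (hy : y ∈ A)
    (h : (G.induce A).Reachable ⟨x, hx⟩ ⟨y, hy⟩) :
    (G.induce B).Reachable ⟨x, hAB hx⟩ ⟨y, hAB hy⟩ := by
  exact reach_map (G := G.induce A) (H := G.induce B) (fun z => ⟨z.1, hAB z.2⟩)
    (fun a b hab => hab) h

end Gen

section BC

variable {V₁ V₂ : Type} (G₁ : SimpleGraph V₁) (G₂ : SimpleGraph V₂) (f : V₁ ≃ V₂)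

/-- the BC step graph -/
def bcG : SimpleGraph (V₁ ⊕ V₂) :=
  SimpleGraph.fromRel (fun u v =>
    (∃ a b, u = Sum.inl a ∧ v = Sum.inl b ∧ G₁.Adj a b) ∨
    (∃ a b, u = Sum.inr a ∧ v = Sum.inr b ∧ G₂.Adj a b) ∨
    (∃ a, u = Sum.inl a ∧ v = Sum.inr (f a)))

variable {G₁ G₂ f}

lemma adj_ll {a b : V₁} : (bcG G₁ G₂ f).Adj (Sum.inl a) (Sum.inl b) ↔ G₁.Adj a b := by
  simp only [bcG, fromRel_adj]
  constructor
  · rintro ⟨hne, h | h⟩ <;>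
      rcases h with ⟨x, y, hx, hy, h⟩ | ⟨x, y, hx, hy, h⟩ | ⟨x, hx, hy⟩ <;>
      simp_all <;> exact h.symm
  · intro h
    exact ⟨by simp [h.ne], Or.inl (Or.inl ⟨a, b, rfl, rfl, h⟩)⟩

lemma adj_rr {a b : V₂} : (bcG G₁ G₂ f).Adj (Sum.inr a) (Sum.inr b) ↔ G₂.Adj a b := by
  simp only [bcG, fromRel_adj]
  constructor
  · rintro ⟨hne, h | h⟩ <;>
      rcases h with ⟨x, y, hx, hy, h⟩ | ⟨x, y, hx, hy, h⟩ | ⟨x, hx, hy⟩ <;>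
      simp_all <;> exact h.symm
  · intro h
    exact ⟨by simp [h.ne], Or.inl (Or.inr (Or.inl ⟨a, b, rfl, rfl, h⟩))⟩

lemma adj_lr {a : V₁} {b : V₂} : (bcG G₁ G₂ f).Adj (Sum.inl a) (Sum.inr b) ↔ b = f a := by
  simp only [bcG, fromRel_adj]
  constructor
  · rintro ⟨hne, h | h⟩ <;>
      rcases h with ⟨x, y, hx, hy, h⟩ | ⟨x, y, hx, hy, h⟩ | ⟨x, hx, hy⟩ <;>
      simp_all
  · rintro rfl
    exact ⟨by simp, Or.inl (Or.inr (Or.inr ⟨a, rfl, rfl⟩))⟩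

lemma adj_rl {b : V₂} {a : V₁} : (bcG G₁ G₂ f).Adj (Sum.inr b) (Sum.inl a) ↔ b = f a := by
  rw [adj_comm]; exact adj_lr

lemma nbhd_inl (a : V₁) :
    (bcG G₁ G₂ f).neighborSet (Sum.inl a) =
      Sum.inl '' (G₁.neighborSet a) ∪ {Sum.inr (f a)} := by
  ext x
  cases x with
  | inl c => simp [mem_neighborSet, adj_ll]
  | inr c => simp [mem_neighborSet, adj_lr]

lemma nbhd_inr (b : V₂) :
    (bcG G₁ G₂ f).neighborSet (Sum.inr b) =
      Sum.inr '' (G₂.neighborSet b) ∪ {Sum.inl (f.symm b)} := by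
  ext x
  cases x with
  | inl c => simp [mem_neighborSet, adj_rl, eq_comm, Equiv.eq_symm_apply, Equiv.symm_apply_eq]
  | inr c => simp [mem_neighborSet, adj_rr]

end BC
section BC2

variable {V₁ V₂ : Type} {G₁ : SimpleGraph V₁} {G₂ : SimpleGraph V₂} {f : V₁ ≃ V₂}

lemma bcG_degree [Finite V₁] [Finite V₂] {d : ℕ}
    (h₁ : ∀ a, (G₁.neighborSet a).ncard = d) (h₂ : ∀ a, (G₂.neighborSet a).ncard = d) :
    ∀ v, ((bcG G₁ G₂ f).neighborSet v).ncard = d + 1 := by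
  intro v
  cases v with
  | inl a =>
    rw [nbhd_inl, Set.ncard_union_eq (by simp), Set.ncard_image_of_injective _ Sum.inl_injective,
      h₁, Set.ncard_singleton]
  | inr b =>
    rw [nbhd_inr, Set.ncard_union_eq (by simp), Set.ncard_image_of_injective _ Sum.inr_injective,
      h₂, Set.ncard_singleton]

lemma bcG_tf (h₁ : ∀ u v w, G₁.Adj u v → G₁.Adj u w → G₁.Adj v w → False)
    (h₂ : ∀ u v w, G₂.Adj u v → G₂.Adj u w → G₂.Adj v w → False) :
    ∀ u v w, (bcG G₁ G₂ f).Adj u v → (bcG G₁ G₂ f).Adj u w → (bcG G₁ G₂ f).Adj v w → False := by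
  rintro (a | a) (b | b) (c | c) huv huw hvw <;>
    simp only [adj_ll, adj_lr, adj_rl, adj_rr] at huv huw hvw
  · exact h₁ a b c huv huw hvw
  · rw [huw] at hvw; exact G₁.irrefl (f.injective hvw ▸ huv)
  · rw [hvw] at huv; exact G₁.irrefl (f.injective huv ▸ huw)
  · rw [← huv] at huw; exact G₂.irrefl (huw ▸ hvw)
  · exact G₁.irrefl (f.injective (huv.symm.trans huw) ▸ hvw)
  · exact G₂.irrefl ((hvw.trans huv.symm) ▸ huw)
  · exact G₂.irrefl ((huw.trans hvw.symm) ▸ huv)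
  · exact h₂ a b c huv huw hvw

lemma bcG_common [Finite V₁] [Finite V₂]
    (h₁ : ∀ u v, u ≠ v → ((G₁.neighborSet u) ∩ (G₁.neighborSet v)).ncard ≤ 2)
    (h₂ : ∀ u v, u ≠ v → ((G₂.neighborSet u) ∩ (G₂.neighborSet v)).ncard ≤ 2) :
    ∀ u v, u ≠ v →
      (((bcG G₁ G₂ f).neighborSet u) ∩ ((bcG G₁ G₂ f).neighborSet v)).ncard ≤ 2 := by
  rintro (a | a) (b | b) hne
  · have hab : a ≠ b := fun h => hne (by rw [h])
    have : ((bcG G₁ G₂ f).neighborSet (Sum.inl a)) ∩ ((bcG G₁ G₂ f).neighborSet (Sum.inl b))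
        = Sum.inl '' ((G₁.neighborSet a) ∩ (G₁.neighborSet b)) := by
      ext x
      cases x with
      | inl c => simp [mem_neighborSet, adj_ll]
      | inr c =>
        simp only [Set.mem_inter_iff, mem_neighborSet, adj_lr, Set.mem_image]
        constructor
        · rintro ⟨rfl, h⟩; exact absurd (f.injective h) hab
        · rintro ⟨y, _, h⟩; exact absurd h (by simp)
    rw [this, Set.ncard_image_of_injective _ Sum.inl_injective]
    exact h₁ a b hab
  · have : ((bcG G₁ G₂ f).neighborSet (Sum.inl a)) ∩ ((bcG G₁ G₂ f).neighborSet (Sum.inr b))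
        ⊆ {Sum.inl (f.symm b), Sum.inr (f a)} := by
      rintro (c | c) ⟨hc1, hc2⟩
      · simp only [mem_neighborSet, adj_rl] at hc2
        simp [hc2, Equiv.symm_apply_apply]
      · simp only [mem_neighborSet, adj_lr] at hc1
        simp [hc1]
    calc _ ≤ ({Sum.inl (f.symm b), Sum.inr (f a)} : Set (V₁ ⊕ V₂)).ncard :=
          Set.ncard_le_ncard this (Set.toFinite _)
      _ ≤ 2 := (Set.ncard_insert_le _ _).trans (by simp)
  · have : ((bcG G₁ G₂ f).neighborSet (Sum.inr a)) ∩ ((bcG G₁ G₂ f).neighborSet (Sum.inl b))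
        ⊆ {Sum.inl (f.symm a), Sum.inr (f b)} := by
      rintro (c | c) ⟨hc1, hc2⟩
      · simp only [mem_neighborSet, adj_rl] at hc1
        simp [hc1, Equiv.symm_apply_apply]
      · simp only [mem_neighborSet, adj_lr] at hc2
        simp [hc2]
    calc _ ≤ ({Sum.inl (f.symm a), Sum.inr (f b)} : Set (V₁ ⊕ V₂)).ncard :=
          Set.ncard_le_ncard this (Set.toFinite _)
      _ ≤ 2 := (Set.ncard_insert_le _ _).trans (by simp)
  · have hab : a ≠ b := fun h => hne (by rw [h])
    have : ((bcG G₁ G₂ f).neighborSet (Sum.inr a)) ∩ ((bcG G₁ G₂ f).neighborSet (Sum.inr b))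
        = Sum.inr '' ((G₂.neighborSet a) ∩ (G₂.neighborSet b)) := by
      ext x
      cases x with
      | inl c =>
        simp only [Set.mem_inter_iff, mem_neighborSet, adj_rl, Set.mem_image]
        constructor
        · rintro ⟨h1, h2⟩; exact absurd (h1.trans h2.symm) hab
        · rintro ⟨y, _, h⟩; exact absurd h (by simp)
      | inr c => simp [mem_neighborSet, adj_rr]
    rw [this, Set.ncard_image_of_injective _ Sum.inr_injective]
    exact h₂ a b hab

end BC2

section BCInd

lemma IsBC.finite {n : ℕ} {V : Type} {G : SimpleGraph V} (h : IsBC n V G) : Finite V := by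
  induction h with
  | base => infer_instance
  | step G₁ G₂ f h₁ h₂ ih₁ ih₂ =>
    haveI := ih₁; haveI := ih₂
    infer_instance

lemma IsBC.card {n : ℕ} {V : Type} {G : SimpleGraph V} (h : IsBC n V G) :
    Nat.card V = 2 ^ n := by
  induction h with
  | base => simp [Nat.card_eq_fintype_card]
  | step G₁ G₂ f h₁ h₂ ih₁ ih₂ =>
    haveI := h₁.finite; haveI := h₂.finite
    rw [Nat.card_sum, ih₁, ih₂, pow_succ]
    ring

lemma IsBC.degree {n : ℕ} {V : Type} {G : SimpleGraph V} (h : IsBC n V G) :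
    ∀ v, (G.neighborSet v).ncard = n := by
  induction h with
  | base =>
    intro v
    have : (⊤ : SimpleGraph Bool).neighborSet v = {!v} := by
      ext w; cases v <;> cases w <;> simp [mem_neighborSet]
    rw [this, Set.ncard_singleton]
  | step G₁ G₂ f h₁ h₂ ih₁ ih₂ =>
    haveI := h₁.finite; haveI := h₂.finite
    exact bcG_degree ih₁ ih₂

lemma IsBC.tf {n : ℕ} {V : Type} {G : SimpleGraph V} (h : IsBC n V G) :
    ∀ u v w, G.Adj u v → G.Adj u w → G.Adj v w → False := by
  induction h with
  | base => intro u v w h1 h2 h3; cases u <;> cases v <;> cases w <;> simp_all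
  | step G₁ G₂ f h₁ h₂ ih₁ ih₂ => exact bcG_tf ih₁ ih₂

lemma IsBC.common {n : ℕ} {V : Type} {G : SimpleGraph V} (h : IsBC n V G) :
    ∀ u v, u ≠ v → ((G.neighborSet u) ∩ (G.neighborSet v)).ncard ≤ 2 := by
  induction h with
  | base =>
    intro u v _
    calc _ ≤ (Set.univ : Set Bool).ncard := Set.ncard_le_ncard (Set.subset_univ _) (Set.toFinite _)
      _ ≤ 2 := by simp [Set.ncard_univ]
  | step G₁ G₂ f h₁ h₂ ih₁ ih₂ =>
    haveI := h₁.finite; haveI := h₂.finite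
    exact bcG_common ih₁ ih₂

end BCInd
section BC3

variable {V₁ V₂ : Type} {G₁ : SimpleGraph V₁} {G₂ : SimpleGraph V₂} {f : V₁ ≃ V₂}

lemma ncard_sum_split [Finite V₁] [Finite V₂] (S : Set (V₁ ⊕ V₂)) :
    S.ncard = (Sum.inl ⁻¹' S).ncard + (Sum.inr ⁻¹' S).ncard := by
  have hS : S = Sum.inl '' (Sum.inl ⁻¹' S) ∪ Sum.inr '' (Sum.inr ⁻¹' S) := by
    ext x; cases x <;> simp
  conv_lhs => rw [hS]
  rw [Set.ncard_union_eq (by simp [Set.disjoint_left]) (Set.toFinite _) (Set.toFinite _),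
    Set.ncard_image_of_injective _ Sum.inl_injective,
    Set.ncard_image_of_injective _ Sum.inr_injective]

lemma exists_notMem_of_ncard_lt {α : Type*} [Finite α] {s : Set α} (h : s.ncard < Nat.card α) :
    ∃ x, x ∉ s := by
  by_contra hc
  push_neg at hc
  rw [Set.eq_univ_of_forall hc, Set.ncard_univ] at h
  omega

/-- lift a reachability statement from the left factor -/
lemma reach_inl {S : Set (V₁ ⊕ V₂)}
    (hPc : (G₁.induce (Sum.inl ⁻¹' S)ᶜ).Preconnected)
    {a b : V₁} (ha : Sum.inl a ∈ Sᶜ) (hb : Sum.inl b ∈ Sᶜ) :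
    ((bcG G₁ G₂ f).induce Sᶜ).Reachable ⟨.inl a, ha⟩ ⟨.inl b, hb⟩ :=
  reach_map (G := G₁.induce (Sum.inl ⁻¹' S)ᶜ) (H := (bcG G₁ G₂ f).induce Sᶜ)
    (fun p => ⟨Sum.inl p.1, p.2⟩) (fun x y h => adj_ll.2 h) (hPc ⟨a, ha⟩ ⟨b, hb⟩)

lemma reach_inr {S : Set (V₁ ⊕ V₂)}
    (hPc : (G₂.induce (Sum.inr ⁻¹' S)ᶜ).Preconnected)
    {a b : V₂} (ha : Sum.inr a ∈ Sᶜ) (hb : Sum.inr b ∈ Sᶜ) :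
    ((bcG G₁ G₂ f).induce Sᶜ).Reachable ⟨.inr a, ha⟩ ⟨.inr b, hb⟩ :=
  reach_map (G := G₂.induce (Sum.inr ⁻¹' S)ᶜ) (H := (bcG G₁ G₂ f).induce Sᶜ)
    (fun p => ⟨Sum.inr p.1, p.2⟩) (fun x y h => adj_rr.2 h) (hPc ⟨a, ha⟩ ⟨b, hb⟩)

lemma reach_bridge {S : Set (V₁ ⊕ V₂)} {a : V₁}
    (ha : Sum.inl a ∈ Sᶜ) (hfa : Sum.inr (f a) ∈ Sᶜ) :
    ((bcG G₁ G₂ f).induce Sᶜ).Reachable ⟨.inl a, ha⟩ ⟨.inr (f a), hfa⟩ :=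
  SimpleGraph.Adj.reachable (by exact adj_lr.2 rfl)

lemma reach_left_edge {S : Set (V₁ ⊕ V₂)} {a b : V₁} (hab : G₁.Adj a b)
    (ha : Sum.inl a ∈ Sᶜ) (hb : Sum.inl b ∈ Sᶜ) :
    ((bcG G₁ G₂ f).induce Sᶜ).Reachable ⟨.inl a, ha⟩ ⟨.inl b, hb⟩ :=
  SimpleGraph.Adj.reachable (by exact adj_ll.2 hab)

/-- key counting step: an alive left vertex with a dead partner has an alive left
neighbour whose partner is alive, provided `|N₁(a)| + |S₂| > |S₁| + |S₂'|`-ish. -/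
lemma exists_good_neighbor [Finite V₁] [Finite V₂] {n : ℕ}
    (hdeg₁ : ∀ a, (G₁.neighborSet a).ncard = n)
    {S₁ : Set V₁} {S₂ : Set V₂} (hcard : S₁.ncard + S₂.ncard ≤ n)
    {a : V₁} (ha : a ∉ S₁) (hfa : f a ∈ S₂) :
    ∃ x, x ∈ G₁.neighborSet a ∧ x ∉ S₁ ∧ f x ∉ S₂ := by
  by_contra hc
  push_neg at hc
  -- the set of alive vertices with dead partner
  set D : Set V₁ := {x | x ∉ S₁ ∧ f x ∈ S₂} with hD
  have hDcard : D.ncard ≤ S₂.ncard := by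
    have : f '' D ⊆ S₂ := by rintro y ⟨x, hx, rfl⟩; exact hx.2
    calc D.ncard = (f '' D).ncard := (Set.ncard_image_of_injective _ f.injective).symm
      _ ≤ S₂.ncard := Set.ncard_le_ncard this (Set.toFinite _)
  set N : Set V₁ := G₁.neighborSet a \ S₁ with hN
  have hNsub : insert a N ⊆ D := by
    rintro x (rfl | hx)
    · exact ⟨ha, hfa⟩
    · exact ⟨hx.2, hc x hx.1 hx.2⟩
  have hNcard : S₂.ncard ≤ N.ncard := by
    have h1 : (G₁.neighborSet a).ncard ≤ N.ncard + S₁.ncard :=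
      Set.ncard_le_ncard_diff_add_ncard _ _ (Set.toFinite _)
    rw [hdeg₁ a] at h1
    omega
  have haN : a ∉ N := fun h => G₁.irrefl h.1
  have : N.ncard + 1 ≤ D.ncard := by
    rw [← Set.ncard_insert_of_notMem haN (Set.toFinite _)]
    exact Set.ncard_le_ncard hNsub (Set.toFinite _)
  omega

lemma bcG_conn_step {n : ℕ} [Finite V₁] [Finite V₂]
    (hn : 1 ≤ n)
    (hcard₁ : Nat.card V₁ = 2 ^ n) (hcard₂ : Nat.card V₂ = 2 ^ n)
    (hdeg₁ : ∀ a, (G₁.neighborSet a).ncard = n)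
    (hconn₁ : ∀ S : Set V₁, S.ncard + 1 ≤ n → (G₁.induce Sᶜ).Preconnected)
    (hconn₂ : ∀ S : Set V₂, S.ncard + 1 ≤ n → (G₂.induce Sᶜ).Preconnected) :
    ∀ S : Set (V₁ ⊕ V₂), S.ncard + 1 ≤ n + 1 → ((bcG G₁ G₂ f).induce Sᶜ).Preconnected := by
  intro S hS
  set S₁ : Set V₁ := Sum.inl ⁻¹' S with hS₁def
  set S₂ : Set V₂ := Sum.inr ⁻¹' S with hS₂def
  have hsplit : S.ncard = S₁.ncard + S₂.ncard := ncard_sum_split S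
  by_cases h2 : S₂.ncard + 1 ≤ n
  · -- right side stays connected
    have hPc₂ : (G₂.induce S₂ᶜ).Preconnected := hconn₂ S₂ h2
    have h2n : (2 : ℕ) ^ n > n := Nat.lt_two_pow_self
    obtain ⟨b₀, hb₀⟩ : ∃ b, b ∉ S₂ := exists_notMem_of_ncard_lt (by omega)
    have hzmem : Sum.inr b₀ ∈ Sᶜ := hb₀
    refine pc_of_base ⟨Sum.inr b₀, hzmem⟩ ?_
    rintro ⟨x, hx⟩
    -- first: every inr-alive vertex reaches the base
    have hinr : ∀ (b : V₂) (hb : Sum.inr b ∈ Sᶜ),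
        ((bcG G₁ G₂ f).induce Sᶜ).Reachable ⟨Sum.inr b, hb⟩ ⟨Sum.inr b₀, hzmem⟩ :=
      fun b hb => reach_inr hPc₂ hb hzmem
    cases x with
    | inr b => exact hinr b hx
    | inl a =>
      by_cases hfa : f a ∈ S₂
      · obtain ⟨x', hx'N, hx'S, hfx'⟩ :=
          exists_good_neighbor (f := f) (S₁ := S₁) (S₂ := S₂) hdeg₁ (by omega) (show a ∉ S₁ from hx) hfa
        have hx'mem : Sum.inl x' ∈ Sᶜ := hx'S
        have hfx'mem : Sum.inr (f x') ∈ Sᶜ := hfx'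
        exact ((reach_left_edge hx'N hx hx'mem).trans
          (reach_bridge hx'mem hfx'mem)).trans (hinr _ hfx'mem)
      · have hfamem : Sum.inr (f a) ∈ Sᶜ := hfa
        exact (reach_bridge hx hfamem).trans (hinr _ hfamem)
  · -- S₂ is large, so S₁ is empty
    have hS₁empty : S₁ = ∅ := by
      have : S₁.ncard = 0 := by omega
      have hfin : S₁.Finite := Set.toFinite _
      exact (Set.ncard_eq_zero hfin).mp this
    have hPc₁ : (G₁.induce S₁ᶜ).Preconnected := hconn₁ S₁ (by rw [hS₁empty]; simpa using hn)
    have hV₁ : Nonempty V₁ := by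
      have : 0 < Nat.card V₁ := by rw [hcard₁]; positivity
      exact Nat.card_pos_iff.mp this |>.1
    obtain ⟨a₀⟩ := hV₁
    have ha₀ : Sum.inl a₀ ∈ Sᶜ := by
      intro h
      have : a₀ ∈ S₁ := h
      rw [hS₁empty] at this
      exact this
    refine pc_of_base ⟨Sum.inl a₀, ha₀⟩ ?_
    rintro ⟨x, hx⟩
    have hinl : ∀ (a : V₁) (ha : Sum.inl a ∈ Sᶜ),
        ((bcG G₁ G₂ f).induce Sᶜ).Reachable ⟨Sum.inl a, ha⟩ ⟨Sum.inl a₀, ha₀⟩ :=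
      fun a ha => reach_inl hPc₁ ha ha₀
    cases x with
    | inl a => exact hinl a hx
    | inr b =>
      have hb' : Sum.inl (f.symm b) ∈ Sᶜ := by
        intro h
        have : f.symm b ∈ S₁ := h
        rw [hS₁empty] at this
        exact this
      have hadj : ((bcG G₁ G₂ f).induce Sᶜ).Adj ⟨Sum.inr b, hx⟩ ⟨Sum.inl (f.symm b), hb'⟩ := by
        exact adj_rl.2 (by simp)
      exact hadj.reachable.trans (hinl _ hb')

end BC3
section BC4

variable {V₁ V₂ : Type} {G₁ : SimpleGraph V₁} {G₂ : SimpleGraph V₂} {f : V₁ ≃ V₂}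

lemma reach_inl' {S : Set (V₁ ⊕ V₂)} (T : Set V₁)
    (hPc : (G₁.induce T).Preconnected) (hT : ∀ a ∈ T, Sum.inl a ∈ Sᶜ)
    {a b : V₁} (ha : a ∈ T) (hb : b ∈ T)
    (ha' : Sum.inl a ∈ Sᶜ) (hb' : Sum.inl b ∈ Sᶜ) :
    ((bcG G₁ G₂ f).induce Sᶜ).Reachable ⟨.inl a, ha'⟩ ⟨.inl b, hb'⟩ :=
  reach_map (G := G₁.induce T) (H := (bcG G₁ G₂ f).induce Sᶜ)
    (fun p => ⟨Sum.inl p.1, hT p.1 p.2⟩) (fun x y h => adj_ll.2 h) (hPc ⟨a, ha⟩ ⟨b, hb⟩)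

lemma reach_inr' {S : Set (V₁ ⊕ V₂)} (T : Set V₂)
    (hPc : (G₂.induce T).Preconnected) (hT : ∀ b ∈ T, Sum.inr b ∈ Sᶜ)
    {a b : V₂} (ha : a ∈ T) (hb : b ∈ T)
    (ha' : Sum.inr a ∈ Sᶜ) (hb' : Sum.inr b ∈ Sᶜ) :
    ((bcG G₁ G₂ f).induce Sᶜ).Reachable ⟨.inr a, ha'⟩ ⟨.inr b, hb'⟩ :=
  reach_map (G := G₂.induce T) (H := (bcG G₁ G₂ f).induce Sᶜ)
    (fun p => ⟨Sum.inr p.1, hT p.1 p.2⟩) (fun x y h => adj_rr.2 h) (hPc ⟨a, ha⟩ ⟨b, hb⟩)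

lemma exists_bridge [Finite V₁] [Finite V₂] {A₁ : Set V₁} {S₂ : Set V₂}
    (h : S₂.ncard < A₁.ncard) : ∃ a ∈ A₁, f a ∉ S₂ := by
  by_contra hc
  push_neg at hc
  have himg : f '' A₁ ⊆ S₂ := by rintro y ⟨x, hx, rfl⟩; exact hc x hx
  have := Set.ncard_le_ncard himg (Set.toFinite _)
  rw [Set.ncard_image_of_injective _ f.injective] at this
  omega

lemma two_mul_le_two_pow {n : ℕ} (h : 1 ≤ n) : 2 * n ≤ 2 ^ n := by
  induction n with
  | zero => omega
  | succ m ih =>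
    rcases Nat.eq_or_lt_of_le h with h1 | h1
    · have : m = 0 := by omega
      subst this; norm_num
    · have hm : 1 ≤ m := by omega
      have h2 := ih hm
      rw [pow_succ]
      omega

lemma two_mul_add_two_le_two_pow {n : ℕ} (h : 3 ≤ n) : 2 * n + 2 ≤ 2 ^ n := by
  induction n with
  | zero => omega
  | succ m ih =>
    rcases Nat.eq_or_lt_of_le h with h1 | h1
    · have : m = 2 := by omega
      subst this; norm_num
    · have hm : 3 ≤ m := by omega
      have h2 := ih hm
      rw [pow_succ]
      omega

lemma four_mul_le_two_pow {n : ℕ} (h : 5 ≤ n) : 4 * n ≤ 2 ^ n := by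
  induction n with
  | zero => omega
  | succ m ih =>
    rcases Nat.eq_or_lt_of_le h with h1 | h1
    · have : m = 4 := by omega
      subst this; norm_num
    · have hm : 5 ≤ m := by omega
      have h2 := ih hm
      rw [pow_succ]
      omega

lemma IsBC.one_le {n : ℕ} {V : Type} {G : SimpleGraph V} (h : IsBC n V G) : 1 ≤ n := by
  induction h with
  | base => exact le_refl 1
  | step G₁ G₂ f h₁ h₂ ih₁ ih₂ => omega

lemma IsBC.conn {n : ℕ} {V : Type} {G : SimpleGraph V} (h : IsBC n V G) :
    ∀ S : Set V, S.ncard + 1 ≤ n → (G.induce Sᶜ).Preconnected := by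
  induction h with
  | base =>
    intro S _ x y
    rcases eq_or_ne x y with rfl | hxy
    · exact Reachable.refl x
    · exact SimpleGraph.Adj.reachable (by exact fun h => hxy (Subtype.ext h))
  | step G₁ G₂ f h₁ h₂ ih₁ ih₂ =>
    haveI := h₁.finite
    haveI := h₂.finite
    exact bcG_conn_step h₁.one_le h₁.card h₂.card h₁.degree ih₁ ih₂

end BC4
section BC5

variable {V₁ V₂ : Type} {G₁ : SimpleGraph V₁} {G₂ : SimpleGraph V₂} {f : V₁ ≃ V₂}

lemma bcG_main_step {n : ℕ} [Finite V₁] [Finite V₂]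
    (hn : 1 ≤ n)
    (hcard₁ : Nat.card V₁ = 2 ^ n) (hcard₂ : Nat.card V₂ = 2 ^ n)
    (hdeg₁ : ∀ a, (G₁.neighborSet a).ncard = n) (hdeg₂ : ∀ b, (G₂.neighborSet b).ncard = n)
    (hconn₁ : ∀ S : Set V₁, S.ncard + 1 ≤ n → (G₁.induce Sᶜ).Preconnected)
    (hconn₂ : ∀ S : Set V₂, S.ncard + 1 ≤ n → (G₂.induce Sᶜ).Preconnected)
    (hmain₁ : ∀ S : Set V₁, S.ncard + 3 ≤ 2 * n → (G₁.induce Sᶜ).Preconnected ∨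
        ∃ w, w ∉ S ∧ G₁.neighborSet w ⊆ S ∧ (G₁.induce (insert w S)ᶜ).Preconnected)
    (hmain₂ : ∀ S : Set V₂, S.ncard + 3 ≤ 2 * n → (G₂.induce Sᶜ).Preconnected ∨
        ∃ w, w ∉ S ∧ G₂.neighborSet w ⊆ S ∧ (G₂.induce (insert w S)ᶜ).Preconnected) :
    ∀ S : Set (V₁ ⊕ V₂), S.ncard + 3 ≤ 2 * (n + 1) →
      ((bcG G₁ G₂ f).induce Sᶜ).Preconnected ∨
      ∃ w, w ∉ S ∧ (bcG G₁ G₂ f).neighborSet w ⊆ S ∧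
        ((bcG G₁ G₂ f).induce (insert w S)ᶜ).Preconnected := by
  intro S hS
  set S₁ : Set V₁ := Sum.inl ⁻¹' S with hS₁def
  set S₂ : Set V₂ := Sum.inr ⁻¹' S with hS₂def
  have hsplit : S.ncard = S₁.ncard + S₂.ncard := ncard_sum_split S
  have h2le : (2:ℕ) ≤ 2 ^ n := le_trans (by omega) (two_mul_le_two_pow hn)
  have hcc₁ := Set.ncard_add_ncard_compl S₁
  have hcc₂ := Set.ncard_add_ncard_compl S₂
  rw [hcard₁] at hcc₁
  rw [hcard₂] at hcc₂
  by_cases hs2 : S₂.ncard ≤ 1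
  · -- CASE R : few faults on the right
    have hPc₂ : (G₂.induce S₂ᶜ).Preconnected := by
      rcases le_or_gt (S₂.ncard + 1) n with hle | hlt
      · exact hconn₂ _ hle
      · apply pc_of_subsingleton
        have hn1 : n = 1 := by omega
        have h2 : (2:ℕ) ^ n = 2 := by rw [hn1]; norm_num
        exact (Set.ncard_le_one (Set.toFinite _)).mp (by omega)
    have hS₂sub : S₂.Subsingleton := (Set.ncard_le_one (Set.toFinite _)).mp hs2
    obtain ⟨b₀, hb₀⟩ : ∃ b, b ∉ S₂ := exists_notMem_of_ncard_lt (by omega)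
    have core : ∀ (S' : Set (V₁ ⊕ V₂)),
        (∀ b : V₂, b ∉ S₂ → Sum.inr b ∈ S'ᶜ) →
        (∀ b : V₂, Sum.inr b ∈ S'ᶜ → b ∉ S₂) →
        (∀ a : V₁, Sum.inl a ∈ S'ᶜ → f a ∈ S₂ →
            ∃ x, G₁.Adj a x ∧ Sum.inl x ∈ S'ᶜ ∧ f x ∉ S₂) →
        ((bcG G₁ G₂ f).induce S'ᶜ).Preconnected := by
      intro S' hrT hsub hroute
      refine pc_of_base ⟨Sum.inr b₀, hrT b₀ hb₀⟩ ?_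
      rintro ⟨x, hx⟩
      have hinr : ∀ (b : V₂) (hb : b ∉ S₂) (hb' : Sum.inr b ∈ S'ᶜ),
          ((bcG G₁ G₂ f).induce S'ᶜ).Reachable ⟨Sum.inr b, hb'⟩ ⟨Sum.inr b₀, hrT b₀ hb₀⟩ :=
        fun b hb hb' => reach_inr' S₂ᶜ hPc₂ (fun c hc => hrT c hc) hb hb₀ hb' (hrT b₀ hb₀)
      cases x with
      | inr b => exact hinr b (hsub b hx) hx
      | inl a =>
        by_cases hfa : f a ∈ S₂
        · obtain ⟨x', hadj, hx', hfx'⟩ := hroute a hx hfa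
          exact ((reach_left_edge hadj hx hx').trans
            (reach_bridge hx' (hrT _ hfx'))).trans (hinr _ hfx' (hrT _ hfx'))
        · exact (reach_bridge hx (hrT _ hfa)).trans (hinr _ hfa (hrT _ hfa))
    by_cases hiso : ∃ a : V₁, Sum.inl a ∈ Sᶜ ∧ f a ∈ S₂ ∧ ∀ x ∈ G₁.neighborSet a, x ∈ S₁
    · obtain ⟨w, hw, hfw, hwn⟩ := hiso
      refine Or.inr ⟨Sum.inl w, hw, ?_, ?_⟩
      · rw [nbhd_inl]
        rintro x (⟨c, hc, rfl⟩ | hx)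
        · exact hwn c hc
        · rw [Set.mem_singleton_iff] at hx
          subst hx
          exact hfw
      · refine core (insert (Sum.inl w) S) ?_ ?_ ?_
        · intro b hb
          simp only [Set.mem_compl_iff, Set.mem_insert_iff]
          push_neg
          exact ⟨by simp, hb⟩
        · intro b hb
          simp only [Set.mem_compl_iff, Set.mem_insert_iff] at hb
          push_neg at hb
          exact hb.2
        · intro a ha hfa
          exfalso
          simp only [Set.mem_compl_iff, Set.mem_insert_iff] at ha
          push_neg at ha
          have haw : a = w := f.injective (hS₂sub hfa hfw)
          exact ha.1 (by rw [haw])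
    · push_neg at hiso
      refine Or.inl (core S (fun b hb => hb) (fun b hb => hb) ?_)
      intro a ha hfa
      obtain ⟨x, hxN, hxS⟩ := hiso a ha hfa
      refine ⟨x, hxN, hxS, ?_⟩
      intro hfx
      have : x = a := f.injective (hS₂sub hfx hfa)
      exact G₁.irrefl (this ▸ hxN)
  by_cases hs1 : S₁.ncard ≤ 1
  · -- CASE L : few faults on the left (mirror)
    have hPc₁ : (G₁.induce S₁ᶜ).Preconnected := by
      rcases le_or_gt (S₁.ncard + 1) n with hle | hlt
      · exact hconn₁ _ hle
      · apply pc_of_subsingleton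
        have hn1 : n = 1 := by omega
        have h2 : (2:ℕ) ^ n = 2 := by rw [hn1]; norm_num
        exact (Set.ncard_le_one (Set.toFinite _)).mp (by omega)
    have hS₁sub : S₁.Subsingleton := (Set.ncard_le_one (Set.toFinite _)).mp hs1
    obtain ⟨a₀, ha₀⟩ : ∃ a, a ∉ S₁ := exists_notMem_of_ncard_lt (by omega)
    have core : ∀ (S' : Set (V₁ ⊕ V₂)),
        (∀ a : V₁, a ∉ S₁ → Sum.inl a ∈ S'ᶜ) →
        (∀ a : V₁, Sum.inl a ∈ S'ᶜ → a ∉ S₁) →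
        (∀ b : V₂, Sum.inr b ∈ S'ᶜ → f.symm b ∈ S₁ →
            ∃ y, G₂.Adj b y ∧ Sum.inr y ∈ S'ᶜ ∧ f.symm y ∉ S₁) →
        ((bcG G₁ G₂ f).induce S'ᶜ).Preconnected := by
      intro S' hrT hsub hroute
      refine pc_of_base ⟨Sum.inl a₀, hrT a₀ ha₀⟩ ?_
      rintro ⟨x, hx⟩
      have hinl : ∀ (a : V₁) (ha : a ∉ S₁) (ha' : Sum.inl a ∈ S'ᶜ),
          ((bcG G₁ G₂ f).induce S'ᶜ).Reachable ⟨Sum.inl a, ha'⟩ ⟨Sum.inl a₀, hrT a₀ ha₀⟩ :=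
        fun a ha ha' => reach_inl' S₁ᶜ hPc₁ (fun c hc => hrT c hc) ha ha₀ ha' (hrT a₀ ha₀)
      have hback : ∀ (b : V₂) (hb : f.symm b ∉ S₁) (hb' : Sum.inr b ∈ S'ᶜ),
          ((bcG G₁ G₂ f).induce S'ᶜ).Reachable ⟨Sum.inr b, hb'⟩
            ⟨Sum.inl (f.symm b), hrT _ hb⟩ := by
        intro b hb hb'
        refine SimpleGraph.Adj.reachable ?_
        exact adj_rl.2 (by simp)
      cases x with
      | inl a => exact hinl a (hsub a hx) hx
      | inr b =>
        by_cases hfb : f.symm b ∈ S₁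
        · obtain ⟨y, hadj, hy, hfy⟩ := hroute b hx hfb
          have hedge : ((bcG G₁ G₂ f).induce S'ᶜ).Adj ⟨Sum.inr b, hx⟩ ⟨Sum.inr y, hy⟩ :=
            adj_rr.2 hadj
          exact (hedge.reachable.trans (hback y hfy hy)).trans (hinl _ hfy (hrT _ hfy))
        · exact (hback b hfb hx).trans (hinl _ hfb (hrT _ hfb))
    by_cases hiso : ∃ b : V₂, Sum.inr b ∈ Sᶜ ∧ f.symm b ∈ S₁ ∧ ∀ y ∈ G₂.neighborSet b, y ∈ S₂
    · obtain ⟨w, hw, hfw, hwn⟩ := hiso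
      refine Or.inr ⟨Sum.inr w, hw, ?_, ?_⟩
      · rw [nbhd_inr]
        rintro x (⟨c, hc, rfl⟩ | hx)
        · exact hwn c hc
        · rw [Set.mem_singleton_iff] at hx
          subst hx
          exact hfw
      · refine core (insert (Sum.inr w) S) ?_ ?_ ?_
        · intro a ha
          simp only [Set.mem_compl_iff, Set.mem_insert_iff]
          push_neg
          exact ⟨by simp, ha⟩
        · intro a ha
          simp only [Set.mem_compl_iff, Set.mem_insert_iff] at ha
          push_neg at ha
          exact ha.2
        · intro b hb hfb
          exfalso
          simp only [Set.mem_compl_iff, Set.mem_insert_iff] at hb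
          push_neg at hb
          have hbw : b = w := by
            have := hS₁sub hfb hfw
            have := congrArg f this
            simpa using this
          exact hb.1 (by rw [hbw])
    · push_neg at hiso
      refine Or.inl (core S (fun a ha => ha) (fun a ha => ha) ?_)
      intro b hb hfb
      obtain ⟨y, hyN, hyS⟩ := hiso b hb hfb
      refine ⟨y, hyN, hyS, ?_⟩
      intro hfy
      have : y = b := by
        have := hS₁sub hfy hfb
        have := congrArg f this
        simpa using this
      exact G₂.irrefl (this ▸ hyN)
  · -- MAIN CASE : at least 2 faults on each side
    push_neg at hs1 hs2
    have hn3 : 3 ≤ n := by omega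
    have h2n2 : 2 * n + 2 ≤ 2 ^ n := two_mul_add_two_le_two_pow hn3
    rcases hmain₂ S₂ (by omega) with hPc₂ | ⟨w₂, hw₂S, hw₂n, hPc₂'⟩
    · rcases hmain₁ S₁ (by omega) with hPc₁ | ⟨w₁, hw₁S, hw₁n, hPc₁'⟩
      · -- both sides connected
        obtain ⟨a, haA, hfa⟩ : ∃ a ∈ S₁ᶜ, f a ∉ S₂ :=
          exists_bridge (by omega)
        have haS : Sum.inl a ∈ Sᶜ := haA
        have hfaS : Sum.inr (f a) ∈ Sᶜ := hfa
        refine Or.inl (pc_of_base ⟨Sum.inl a, haS⟩ ?_)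
        rintro ⟨x, hx⟩
        cases x with
        | inl b => exact reach_inl' S₁ᶜ hPc₁ (fun c hc => hc) hx haA hx haS
        | inr b =>
          exact (reach_inr' S₂ᶜ hPc₂ (fun c hc => hc) hx hfa hx hfaS).trans
            (reach_bridge haS hfaS).symm
      · -- left side has an isolated vertex w₁
        have hs₁n : n ≤ S₁.ncard := by
          rw [← hdeg₁ w₁]
          exact Set.ncard_le_ncard hw₁n (Set.toFinite _)
        set T₁ : Set V₁ := (insert w₁ S₁)ᶜ with hT₁def
        have hT₁card : (insert w₁ S₁).ncard + T₁.ncard = 2 ^ n := by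
          rw [hT₁def, ← hcard₁]
          exact Set.ncard_add_ncard_compl _
        have hins : (insert w₁ S₁).ncard = S₁.ncard + 1 :=
          Set.ncard_insert_of_notMem hw₁S (Set.toFinite _)
        obtain ⟨a, haT₁, hfa⟩ : ∃ a ∈ T₁, f a ∉ S₂ :=
          exists_bridge (by omega)
        have haT₁' : a ∉ insert w₁ S₁ := haT₁
        have haS : Sum.inl a ∈ Sᶜ := fun h => haT₁' (Set.mem_insert_iff.mpr (Or.inr h))
        have hfaS : Sum.inr (f a) ∈ Sᶜ := hfa
        by_cases hfw : f w₁ ∈ S₂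
        · -- w₁ is isolated in the whole graph
          refine Or.inr ⟨Sum.inl w₁, hw₁S, ?_, ?_⟩
          · rw [nbhd_inl]
            rintro x (⟨c, hc, rfl⟩ | hx)
            · exact hw₁n hc
            · rw [Set.mem_singleton_iff] at hx
              subst hx
              exact hfw
          · set S' : Set (V₁ ⊕ V₂) := insert (Sum.inl w₁) S with hS'def
            have hmeml : ∀ c : V₁, c ∈ T₁ → Sum.inl c ∈ S'ᶜ := by
              intro c hc
              have hc' : c ∉ insert w₁ S₁ := hc
              simp only [hS'def, Set.mem_compl_iff, Set.mem_insert_iff]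
              push_neg
              constructor
              · intro h
                exact hc' (Set.mem_insert_iff.mpr (Or.inl (Sum.inl_injective h)))
              · intro h
                exact hc' (Set.mem_insert_iff.mpr (Or.inr h))
            have hmemr : ∀ c : V₂, c ∉ S₂ → Sum.inr c ∈ S'ᶜ := by
              intro c hc
              simp only [hS'def, Set.mem_compl_iff, Set.mem_insert_iff]
              push_neg
              exact ⟨by simp, hc⟩
            refine pc_of_base ⟨Sum.inl a, hmeml a haT₁⟩ ?_
            rintro ⟨x, hx⟩
            cases x with
            | inl b =>
              have hbT₁ : b ∈ T₁ := by
                intro hmem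
                simp only [hS'def, Set.mem_compl_iff, Set.mem_insert_iff] at hx
                push_neg at hx
                rcases Set.mem_insert_iff.mp hmem with h | h
                · exact hx.1 (by rw [h])
                · exact hx.2 h
              exact reach_inl' T₁ hPc₁' hmeml hbT₁ haT₁ hx (hmeml a haT₁)
            | inr b =>
              have hbS₂ : b ∉ S₂ := by
                intro hmem
                simp only [hS'def, Set.mem_compl_iff, Set.mem_insert_iff] at hx
                push_neg at hx
                exact hx.2 hmem
              exact (reach_inr' S₂ᶜ hPc₂ hmemr hbS₂ hfa hx (hmemr _ hfa)).trans
                (reach_bridge (hmeml a haT₁) (hmemr _ hfa)).symm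
        · -- the partner of w₁ is alive: everything is connected
          have hw₁S' : Sum.inl w₁ ∈ Sᶜ := hw₁S
          have hfwS : Sum.inr (f w₁) ∈ Sᶜ := hfw
          have hmeml : ∀ c : V₁, c ∈ T₁ → Sum.inl c ∈ Sᶜ := by
            intro c hc
            have hc' : c ∉ insert w₁ S₁ := hc
            intro h
            exact hc' (Set.mem_insert_iff.mpr (Or.inr h))
          refine Or.inl (pc_of_base ⟨Sum.inl a, haS⟩ ?_)
          rintro ⟨x, hx⟩
          have hinr : ∀ (b : V₂) (hb : b ∉ S₂) (hb' : Sum.inr b ∈ Sᶜ),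
              ((bcG G₁ G₂ f).induce Sᶜ).Reachable ⟨Sum.inr b, hb'⟩ ⟨Sum.inl a, haS⟩ :=
            fun b hb hb' =>
              (reach_inr' S₂ᶜ hPc₂ (fun c hc => hc) hb hfa hb' hfaS).trans
                (reach_bridge haS hfaS).symm
          cases x with
          | inl b =>
            by_cases hbw : b = w₁
            · subst hbw
              exact (reach_bridge hw₁S' hfwS).trans (hinr _ hfw hfwS)
            · have hbT₁ : b ∈ T₁ := by
                intro hmem
                rcases Set.mem_insert_iff.mp hmem with h | h
                · exact hbw h
                · exact hx h
              exact reach_inl' T₁ hPc₁' hmeml hbT₁ haT₁ hx haS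
          | inr b => exact hinr b hx hx
    · -- right side has an isolated vertex w₂
      have hs₂n : n ≤ S₂.ncard := by
        rw [← hdeg₂ w₂]
        exact Set.ncard_le_ncard hw₂n (Set.toFinite _)
      have hPc₁ : (G₁.induce S₁ᶜ).Preconnected := hconn₁ S₁ (by omega)
      set T₂ : Set V₂ := (insert w₂ S₂)ᶜ with hT₂def
      have hins : (insert w₂ S₂).ncard = S₂.ncard + 1 :=
        Set.ncard_insert_of_notMem hw₂S (Set.toFinite _)
      obtain ⟨a, haA, hfa⟩ : ∃ a ∈ S₁ᶜ, f a ∉ insert w₂ S₂ :=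
        exists_bridge (by rw [hins]; omega)
      have haS : Sum.inl a ∈ Sᶜ := haA
      have hfaT₂ : f a ∈ T₂ := hfa
      have hfaS : Sum.inr (f a) ∈ Sᶜ := fun h => hfa (Set.mem_insert_iff.mpr (Or.inr h))
      have hmemr : ∀ c : V₂, c ∈ T₂ → Sum.inr c ∈ Sᶜ := by
        intro c hc
        have hc' : c ∉ insert w₂ S₂ := hc
        intro h
        exact hc' (Set.mem_insert_iff.mpr (Or.inr h))
      by_cases hw₂p : f.symm w₂ ∈ S₁
      · -- w₂ is isolated in the whole graph
        refine Or.inr ⟨Sum.inr w₂, hw₂S, ?_, ?_⟩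
        · rw [nbhd_inr]
          rintro x (⟨c, hc, rfl⟩ | hx)
          · exact hw₂n hc
          · rw [Set.mem_singleton_iff] at hx
            subst hx
            exact hw₂p
        · set S' : Set (V₁ ⊕ V₂) := insert (Sum.inr w₂) S with hS'def
          have hmeml' : ∀ c : V₁, c ∉ S₁ → Sum.inl c ∈ S'ᶜ := by
            intro c hc
            simp only [hS'def, Set.mem_compl_iff, Set.mem_insert_iff]
            push_neg
            exact ⟨by simp, hc⟩
          have hmemr' : ∀ c : V₂, c ∈ T₂ → Sum.inr c ∈ S'ᶜ := by
            intro c hc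
            have hc' : c ∉ insert w₂ S₂ := hc
            simp only [hS'def, Set.mem_compl_iff, Set.mem_insert_iff]
            push_neg
            constructor
            · intro h
              exact hc' (Set.mem_insert_iff.mpr (Or.inl (Sum.inr_injective h)))
            · intro h
              exact hc' (Set.mem_insert_iff.mpr (Or.inr h))
          refine pc_of_base ⟨Sum.inl a, hmeml' a haA⟩ ?_
          rintro ⟨x, hx⟩
          cases x with
          | inl b =>
            have hbS₁ : b ∉ S₁ := by
              intro hmem
              simp only [hS'def, Set.mem_compl_iff, Set.mem_insert_iff] at hx
              push_neg at hx
              exact hx.2 hmem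
            exact reach_inl' S₁ᶜ hPc₁ hmeml' hbS₁ haA hx (hmeml' a haA)
          | inr b =>
            have hbT₂ : b ∈ T₂ := by
              intro hmem
              simp only [hS'def, Set.mem_compl_iff, Set.mem_insert_iff] at hx
              push_neg at hx
              rcases Set.mem_insert_iff.mp hmem with h | h
              · exact hx.1 (by rw [h])
              · exact hx.2 h
            exact (reach_inr' T₂ hPc₂' hmemr' hbT₂ hfaT₂ hx (hmemr' _ hfaT₂)).trans
              (reach_bridge (hmeml' a haA) (hmemr' _ hfaT₂)).symm
      · -- the partner of w₂ is alive
        have hw₂S' : Sum.inr w₂ ∈ Sᶜ := hw₂S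
        have hw₂pS : Sum.inl (f.symm w₂) ∈ Sᶜ := hw₂p
        refine Or.inl (pc_of_base ⟨Sum.inl a, haS⟩ ?_)
        rintro ⟨x, hx⟩
        have hinl : ∀ (b : V₁) (hb : b ∉ S₁) (hb' : Sum.inl b ∈ Sᶜ),
            ((bcG G₁ G₂ f).induce Sᶜ).Reachable ⟨Sum.inl b, hb'⟩ ⟨Sum.inl a, haS⟩ :=
          fun b hb hb' => reach_inl' S₁ᶜ hPc₁ (fun c hc => hc) hb haA hb' haS
        cases x with
        | inl b => exact hinl b hx hx
        | inr b =>
          by_cases hbw : b = w₂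
          · subst hbw
            have hedge : ((bcG G₁ G₂ f).induce Sᶜ).Adj ⟨Sum.inr b, hx⟩
                ⟨Sum.inl (f.symm b), hw₂pS⟩ := adj_rl.2 (by simp)
            exact hedge.reachable.trans (hinl _ hw₂p hw₂pS)
          · have hbT₂ : b ∈ T₂ := by
              intro hmem
              rcases Set.mem_insert_iff.mp hmem with h | h
              · exact hbw h
              · exact hx h
            exact (reach_inr' T₂ hPc₂' hmemr hbT₂ hfaT₂ hx hfaS).trans
              (reach_bridge haS hfaS).symm

end BC5
section BC6

lemma IsBC.main {n : ℕ} {V : Type} {G : SimpleGraph V} (h : IsBC n V G) :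
    ∀ S : Set V, S.ncard + 3 ≤ 2 * n →
      (G.induce Sᶜ).Preconnected ∨
      ∃ w, w ∉ S ∧ G.neighborSet w ⊆ S ∧ (G.induce (insert w S)ᶜ).Preconnected := by
  induction h with
  | base => intro S hS; exact absurd hS (by omega)
  | step G₁ G₂ f h₁ h₂ ih₁ ih₂ =>
    haveI := h₁.finite
    haveI := h₂.finite
    exact bcG_main_step h₁.one_le h₁.card h₂.card h₁.degree h₂.degree h₁.conn h₂.conn ih₁ ih₂

variable {W : Type*} {H : SimpleGraph W}

lemma supp_univ_of_pc (h : H.Preconnected) (C : H.ConnectedComponent) :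
    C.supp = Set.univ := by
  obtain ⟨v, rfl⟩ := C.exists_rep
  exact Set.eq_univ_of_forall fun x => ConnectedComponent.eq.mpr (h x v)

lemma supp_of_isolated {x : W} (hx : ∀ y, ¬ H.Adj x y) :
    (H.connectedComponentMk x).supp = {x} := by
  apply Set.eq_singleton_iff_unique_mem.mpr
  refine ⟨rfl, ?_⟩
  intro y hy
  have hr : H.Reachable x y := (ConnectedComponent.eq.mp hy).symm
  have := walk_closed (A := {x}) (G := H) ?_ hr rfl
  · exact this
  · intro a b ha hab
    rw [Set.mem_singleton_iff] at ha
    subst ha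
    exact absurd hab (hx b)

/-- the two-component structure in the isolated case -/
lemma supp_dichotomy {V : Type} {G : SimpleGraph V} {S : Set V} {w : V}
    (hw : w ∉ S) (hwn : G.neighborSet w ⊆ S)
    (hPc : (G.induce (insert w S)ᶜ).Preconnected)
    (C : (G.induce Sᶜ).ConnectedComponent) :
    C.supp = {(⟨w, hw⟩ : ↥(Sᶜ))} ∨ C.supp = {(⟨w, hw⟩ : ↥(Sᶜ))}ᶜ := by
  set w' : ↥(Sᶜ) := ⟨w, hw⟩ with hw'def
  have hiso : ∀ y, ¬ (G.induce Sᶜ).Adj w' y := by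
    rintro ⟨y, hy⟩ hadj
    exact hy (hwn hadj)
  have hreach : ∀ x y : ↥(Sᶜ), x ≠ w' → y ≠ w' → (G.induce Sᶜ).Reachable x y := by
    rintro ⟨x, hx⟩ ⟨y, hy⟩ hxw hyw
    have hx' : x ∈ (insert w S)ᶜ := by
      intro hmem
      rcases Set.mem_insert_iff.mp hmem with h | h
      · exact hxw (Subtype.ext h)
      · exact hx h
    have hy' : y ∈ (insert w S)ᶜ := by
      intro hmem
      rcases Set.mem_insert_iff.mp hmem with h | h
      · exact hyw (Subtype.ext h)
      · exact hy h
    exact reach_mono (by intro z hz hmem; exact hz (Set.mem_insert_iff.mpr (Or.inr hmem)))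
      hx' hy' (hPc ⟨x, hx'⟩ ⟨y, hy'⟩)
  obtain ⟨x, rfl⟩ := C.exists_rep
  by_cases hxw : x = w'
  · subst hxw
    exact Or.inl (supp_of_isolated hiso)
  · right
    ext y
    simp only [ConnectedComponent.mem_supp_iff, Set.mem_compl_iff, Set.mem_singleton_iff]
    constructor
    · intro hy hyw
      subst hyw
      have : x ∈ ((G.induce Sᶜ).connectedComponentMk w').supp :=
        (ConnectedComponent.mem_supp_iff _ _).mpr hy.symm
      rw [supp_of_isolated hiso] at this
      exact hxw this
    · intro hyw
      exact ConnectedComponent.eq.mpr (hreach y x hyw hxw)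

end BC6
section BC7

lemma cut_lemma {n : ℕ} {V : Type} {G : SimpleGraph V} (hG : IsBC n V G) (hn : 5 ≤ n) :
    ∃ S₀ : Set V, S₀.ncard = 2 * n - 2 ∧ IsOneExtraCut G S₀ ∧
      ∃ C : (G.induce (S₀ᶜ : Set V)).ConnectedComponent, C.supp.ncard = 2 := by
  haveI := hG.finite
  have hcard := hG.card
  have hdeg := hG.degree
  have htf := hG.tf
  have hcom := hG.common
  have h2n2 : 2 * n + 2 ≤ 2 ^ n := two_mul_add_two_le_two_pow (by omega)
  -- find an edge
  have hVne : Nonempty V := by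
    have : 0 < Nat.card V := by rw [hcard]; positivity
    exact (Nat.card_pos_iff.mp this).1
  obtain ⟨u⟩ := hVne
  have hNu : (G.neighborSet u).Nonempty := by
    apply Set.nonempty_of_ncard_ne_zero
    rw [hdeg u]
    omega
  obtain ⟨v, hv⟩ := hNu
  have hadj : G.Adj u v := hv
  set S₀ : Set V := (G.neighborSet u ∪ G.neighborSet v) \ {u, v} with hS₀def
  have hdisj : Disjoint (G.neighborSet u) (G.neighborSet v) := by
    rw [Set.disjoint_left]
    intro x hxu hxv
    exact htf u v x hadj hxu hxv
  have hsub : ({u, v} : Set V) ⊆ G.neighborSet u ∪ G.neighborSet v := by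
    rintro x (rfl | rfl)
    · exact Or.inr hadj.symm
    · exact Or.inl hadj
  have hS₀card : S₀.ncard = 2 * n - 2 := by
    rw [hS₀def, Set.ncard_diff hsub (Set.toFinite _),
      Set.ncard_union_eq hdisj (Set.toFinite _) (Set.toFinite _), hdeg, hdeg,
      Set.ncard_pair hadj.ne]
    omega
  have huS : u ∈ S₀ᶜ := by
    intro h
    exact h.2 (Or.inl rfl)
  have hvS : v ∈ S₀ᶜ := by
    intro h
    exact h.2 (Or.inr rfl)
  -- the pair {u, v} is closed under adjacency in the reduced graph
  have hclosed : ∀ x y : V, x ∈ S₀ᶜ → y ∈ S₀ᶜ → (x = u ∨ x = v) → G.Adj x y →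
      (y = u ∨ y = v) := by
    intro x y hx hy hxuv hxy
    by_contra hc
    push_neg at hc
    apply hy
    refine ⟨?_, by rintro (rfl | rfl) <;> simp_all⟩
    rcases hxuv with rfl | rfl
    · exact Or.inl hxy
    · exact Or.inr hxy
  -- the component of u is exactly {u, v}
  have hsupp : ((G.induce (S₀ᶜ : Set V)).connectedComponentMk ⟨u, huS⟩).supp
      = {(⟨u, huS⟩ : ↥(S₀ᶜ)), (⟨v, hvS⟩ : ↥(S₀ᶜ))} := by
    ext z
    simp only [ConnectedComponent.mem_supp_iff, Set.mem_insert_iff, Set.mem_singleton_iff]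
    constructor
    · intro hz
      have hr : (G.induce (S₀ᶜ : Set V)).Reachable ⟨u, huS⟩ z :=
        (ConnectedComponent.eq.mp hz).symm
      have := walk_closed (G := G.induce (S₀ᶜ : Set V))
        (A := {p : ↥(S₀ᶜ) | p.1 = u ∨ p.1 = v}) ?_ hr (Or.inl rfl)
      · rcases this with h | h
        · exact Or.inl (Subtype.ext h)
        · exact Or.inr (Subtype.ext h)
      · rintro ⟨p, hp⟩ ⟨q, hq⟩ hpA hpq
        exact hclosed p q hp hq hpA hpq
    · rintro (rfl | rfl)
      · rfl
      · exact ConnectedComponent.eq.mpr (SimpleGraph.Adj.reachable (by exact hadj.symm))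
  have hne_uv : (⟨u, huS⟩ : ↥(S₀ᶜ)) ≠ ⟨v, hvS⟩ :=
    fun h => hadj.ne (congrArg Subtype.val h)
  have hsupp2 : ((G.induce (S₀ᶜ : Set V)).connectedComponentMk ⟨u, huS⟩).supp.ncard = 2 := by
    rw [hsupp]
    exact Set.ncard_pair hne_uv
  -- a vertex outside S₀ ∪ {u, v}
  obtain ⟨z, hz⟩ : ∃ z, z ∉ S₀ ∪ {u, v} := by
    apply exists_notMem_of_ncard_lt
    calc (S₀ ∪ {u, v}).ncard ≤ S₀.ncard + ({u, v} : Set V).ncard := Set.ncard_union_le _ _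
      _ ≤ 2 * n - 2 + 2 := by rw [hS₀card, Set.ncard_pair hadj.ne]
      _ < Nat.card V := by rw [hcard]; omega
  have hzS : z ∈ S₀ᶜ := fun h => hz (Or.inl h)
  have hzuv : z ≠ u ∧ z ≠ v := by
    constructor <;> intro h <;> exact hz (Or.inr (by simp [h]))
  -- not preconnected
  have hnotpc : ¬ (G.induce (S₀ᶜ : Set V)).Preconnected := by
    intro hPc
    have hr := (hPc ⟨u, huS⟩ ⟨z, hzS⟩)
    have := walk_closed (G := G.induce (S₀ᶜ : Set V))
      (A := {p : ↥(S₀ᶜ) | p.1 = u ∨ p.1 = v}) ?_ hr (Or.inl rfl)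
    · rcases this with h | h
      · exact hzuv.1 h
      · exact hzuv.2 h
    · rintro ⟨p, hp⟩ ⟨q, hq⟩ hpA hpq
      exact hclosed p q hp hq hpA hpq
  -- every component has at least two vertices
  have hall : ∀ C : (G.induce (S₀ᶜ : Set V)).ConnectedComponent, 2 ≤ C.supp.ncard := by
    intro C
    obtain ⟨x, rfl⟩ := C.exists_rep
    obtain ⟨x, hx⟩ := x
    show 2 ≤ ((G.induce (S₀ᶜ : Set V)).connectedComponentMk ⟨x, hx⟩).supp.ncard
    by_cases hxuv : x = u ∨ x = v
    · have hCu : (G.induce (S₀ᶜ : Set V)).connectedComponentMk ⟨x, hx⟩ =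
          (G.induce (S₀ᶜ : Set V)).connectedComponentMk ⟨u, huS⟩ := by
        apply ConnectedComponent.eq.mpr
        rcases hxuv with rfl | rfl
        · rfl
        · exact SimpleGraph.Adj.reachable (by exact hadj.symm)
      rw [hCu, hsupp2]
    · push_neg at hxuv
      -- x has a neighbour outside S₀
      have hcount : (G.neighborSet x ∩ S₀).ncard ≤ 4 := by
        have hsubx : G.neighborSet x ∩ S₀ ⊆
            (G.neighborSet x ∩ G.neighborSet u) ∪ (G.neighborSet x ∩ G.neighborSet v) := by
          rintro y ⟨hy1, hy2⟩
          rcases hy2.1 with h | h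
          · exact Or.inl ⟨hy1, h⟩
          · exact Or.inr ⟨hy1, h⟩
        calc (G.neighborSet x ∩ S₀).ncard
            ≤ ((G.neighborSet x ∩ G.neighborSet u) ∪
                (G.neighborSet x ∩ G.neighborSet v)).ncard :=
              Set.ncard_le_ncard hsubx (Set.toFinite _)
          _ ≤ (G.neighborSet x ∩ G.neighborSet u).ncard +
                (G.neighborSet x ∩ G.neighborSet v).ncard := Set.ncard_union_le _ _
          _ ≤ 4 := by
              have h1 := hcom x u hxuv.1
              have h2 := hcom x v hxuv.2
              omega
      have hdiff : 1 ≤ (G.neighborSet x \ S₀).ncard := by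
        have heq : G.neighborSet x = (G.neighborSet x \ S₀) ∪ (G.neighborSet x ∩ S₀) :=
          (Set.diff_union_inter _ _).symm
        have hle : (G.neighborSet x).ncard ≤
            (G.neighborSet x \ S₀).ncard + (G.neighborSet x ∩ S₀).ncard := by
          conv_lhs => rw [heq]
          exact Set.ncard_union_le _ _
        rw [hdeg x] at hle
        omega
      obtain ⟨y, hyN, hyS₀⟩ := Set.nonempty_of_ncard_ne_zero (by omega : (G.neighborSet x \ S₀).ncard ≠ 0)
      have hyS : y ∈ S₀ᶜ := hyS₀
      have hxy : (⟨x, hx⟩ : ↥(S₀ᶜ)) ≠ ⟨y, hyS⟩ := by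
        intro h
        obtain rfl : x = y := congrArg Subtype.val h
        exact G.irrefl hyN
      have hpair : {(⟨x, hx⟩ : ↥(S₀ᶜ)), (⟨y, hyS⟩ : ↥(S₀ᶜ))} ⊆
          ((G.induce (S₀ᶜ : Set V)).connectedComponentMk ⟨x, hx⟩).supp := by
        rintro p (rfl | rfl)
        · rfl
        · exact ConnectedComponent.eq.mpr (SimpleGraph.Adj.reachable (by exact hyN.symm))
      calc (2 : ℕ) = ({(⟨x, hx⟩ : ↥(S₀ᶜ)), (⟨y, hyS⟩ : ↥(S₀ᶜ))} : Set ↥(S₀ᶜ)).ncard :=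
            (Set.ncard_pair hxy).symm
        _ ≤ _ := Set.ncard_le_ncard hpair (Set.toFinite _)
  exact ⟨S₀, hS₀card, ⟨hnotpc, hall⟩, _, hsupp2⟩

end BC7
/-- For any `n`-dimensional BC network `X_n ∈ L_n` with `n ≥ 5`, the
pessimistic diagnosability and the 1-extra connectivity of `X_n` both equal `2n − 2`. -/
theorem bcNetwork_tp_eq_extraConn (n : ℕ) (hn : 5 ≤ n) (V : Type) (G : SimpleGraph V)
    (hG : IsBC n V G) :
    pessDiagnosability G = 2 * n - 2 ∧ extraConn1 G = 2 * n - 2 := by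
  haveI := hG.finite
  have hcard := hG.card
  have h4n : 4 * n ≤ 2 ^ n := four_mul_le_two_pow hn
  have h2n2 : 2 * n + 2 ≤ 2 ^ n := two_mul_add_two_le_two_pow (by omega)
  obtain ⟨S₀, hS₀card, hS₀cut, C₂, hC₂⟩ := cut_lemma hG hn
  -- every `t` with `PessDiag G t` satisfies `t ≤ 2n - 2`
  have hub : ∀ t, PessDiag G t → t ≤ 2 * n - 2 := by
    intro t ht
    by_contra hgt
    push_neg at hgt
    have h2 := (ht S₀ (by omega)).2 C₂ (le_of_eq hC₂.symm)
    rw [hC₂] at h2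
    omega
  -- `PessDiag G (2n - 2)` holds
  have hmem : PessDiag G (2 * n - 2) := by
    intro S hS
    have hSc : S.ncard + (Sᶜ : Set V).ncard = 2 ^ n := by
      rw [← hcard]; exact Set.ncard_add_ncard_compl S
    have hAcard : Nat.card ↥(Sᶜ : Set V) = (Sᶜ : Set V).ncard := Nat.card_coe_set_eq _
    rcases hG.main S (by omega) with hPc | ⟨w, hw, hwn, hPc'⟩
    · constructor
      · intro C hC C' hC'
        exfalso
        simp only [Set.mem_setOf_eq] at hC
        rw [supp_univ_of_pc hPc C, Set.ncard_univ, hAcard] at hC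
        omega
      · intro C _
        rw [supp_univ_of_pc hPc C, Set.ncard_univ, hAcard]
        omega
    · have hdich := supp_dichotomy hw hwn hPc'
      have hsingle : ({(⟨w, hw⟩ : ↥(Sᶜ : Set V))} : Set ↥(Sᶜ : Set V)).ncard = 1 :=
        Set.ncard_singleton _
      have hcompl : (({(⟨w, hw⟩ : ↥(Sᶜ : Set V))} : Set ↥(Sᶜ : Set V))ᶜ).ncard
          = (Sᶜ : Set V).ncard - 1 := by
        have h0 := Set.ncard_add_ncard_compl ({(⟨w, hw⟩ : ↥(Sᶜ : Set V))} : Set ↥(Sᶜ : Set V))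
        rw [hsingle, hAcard] at h0
        omega
      constructor
      · intro C hC C' hC'
        simp only [Set.mem_setOf_eq] at hC hC'
        have h1 : C.supp = {(⟨w, hw⟩ : ↥(Sᶜ : Set V))} := by
          rcases hdich C with h | h
          · exact h
          · rw [h, hcompl] at hC; omega
        have h2 : C'.supp = {(⟨w, hw⟩ : ↥(Sᶜ : Set V))} := by
          rcases hdich C' with h | h
          · exact h
          · rw [h, hcompl] at hC'; omega
        have hc1 : (G.induce (Sᶜ : Set V)).connectedComponentMk ⟨w, hw⟩ = C := by
          apply (ConnectedComponent.mem_supp_iff _ _).mp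
          rw [h1]; rfl
        have hc2 : (G.induce (Sᶜ : Set V)).connectedComponentMk ⟨w, hw⟩ = C' := by
          apply (ConnectedComponent.mem_supp_iff _ _).mp
          rw [h2]; rfl
        rw [← hc1, ← hc2]
      · intro C hC2
        rcases hdich C with h | h
        · rw [h, hsingle] at hC2; omega
        · rw [h, hcompl]
          omega
  -- every 1-extra cut has at least `2n - 2` vertices
  have hlow : ∀ m ∈ {m | ∃ S : Set V, IsOneExtraCut G S ∧ S.ncard = m}, 2 * n - 2 ≤ m := by
    rintro m ⟨S, ⟨hncut, hall⟩, rfl⟩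
    by_contra hlt
    push_neg at hlt
    rcases hG.main S (by omega) with hPc | ⟨w, hw, hwn, hPc'⟩
    · exact hncut hPc
    · have hiso : ∀ y, ¬ (G.induce (Sᶜ : Set V)).Adj ⟨w, hw⟩ y := by
        rintro ⟨y, hy⟩ hadj
        exact hy (hwn hadj)
      have := hall ((G.induce (Sᶜ : Set V)).connectedComponentMk ⟨w, hw⟩)
      rw [supp_of_isolated hiso, Set.ncard_singleton] at this
      omega
  constructor
  · apply le_antisymm
    · exact csSup_le ⟨2 * n - 2, hmem⟩ hub
    · exact le_csSup ⟨2 * n - 2, fun t ht => hub t ht⟩ hmem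
  · apply le_antisymm
    · exact Nat.sInf_le ⟨S₀, hS₀cut, hS₀card⟩
    · exact le_csInf ⟨2 * n - 2, S₀, hS₀cut, hS₀card⟩ hlow
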